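/- Let α = [a₀; a₁, a₂, …] be a real number with convergents pₖ/qₖ, let n ≥ 1, and let p/q = [a₀; a₁, …, a_{n−1}, b_n] be an irreducible fraction where b_n is a positive integer with b_n ≥ 2. If b_n < a_n, then |α − p/q| ≥ 2/(3q²). -/
import Mathlib


open GenContFract

/-- `x` is a convergent of the simple continued fraction expansion of `α`. -/
def Real.IsConvergentOf (α x : ℝ) : Prop :=
  ∃ n : ℕ, (GenContFract.of α).convs n = x

/-- `x` is a nearest mediant of `α`: a mediant `(b·pₙ + pₙ₋₁)/(b·qₙ + qₙ₋₁)` with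
`b` an integer, `1 ≤ b ≤ a_{n+1} - 1`, and moreover `b = 1` or `b = a_{n+1} - 1`.
Here `pₖ/qₖ` are the convergents of `α` and `a_{n+1}` is the `(n+1)`-st partial
quotient of `α` (which must exist). -/
def Real.IsNearestMediantOf (α x : ℝ) : Prop :=
  ∃ (n : ℕ) (b : ℤ) (a : ℝ),
    (GenContFract.of α).partDens.get? n = some a ∧
    1 ≤ b ∧ (b : ℝ) ≤ a - 1 ∧ ((b : ℝ) = 1 ∨ (b : ℝ) = a - 1) ∧
    x = ((b : ℝ) * ((GenContFract.of α).contsAux (n + 1)).a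
          + ((GenContFract.of α).contsAux n).a) /
        ((b : ℝ) * ((GenContFract.of α).contsAux (n + 1)).b
          + ((GenContFract.of α).contsAux n).b)

/-- `x` is a first mediant of `α`: a mediant `(b·pₙ + pₙ₋₁)/(b·qₙ + qₙ₋₁)` with `b = 1`,
where `1 ≤ a_{n+1} - 1`. -/
def Real.IsFirstMediantOf (α x : ℝ) : Prop :=
  ∃ (n : ℕ) (a : ℝ),
    (GenContFract.of α).partDens.get? n = some a ∧
    (1 : ℝ) ≤ a - 1 ∧
    x = (((GenContFract.of α).contsAux (n + 1)).a + ((GenContFract.of α).contsAux n).a) /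
        (((GenContFract.of α).contsAux (n + 1)).b + ((GenContFract.of α).contsAux n).b)

/-- The value of the finite simple continued fraction `[a; l₀, l₁, …]`. -/
noncomputable def cfVal : ℤ → List ℤ → ℝ
  | a, [] => (a : ℝ)
  | a, x :: xs => (a : ℝ) + 1 / cfVal x xs

/-- Continuants (numerator, denominator) of a finite continued fraction list. -/
def contL : List ℤ → ℤ × ℤ
  | [] => (1, 0)
  | x :: l => (x * (contL l).1 + (contL l).2, (contL l).1)

lemma contL_pos {l : List ℤ} (h : ∀ x ∈ l, 1 ≤ x) :
    1 ≤ (contL l).1 ∧ 0 ≤ (contL l).2 := by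
  induction l with
  | nil => simp [contL]
  | cons x l ih =>
    have hx : 1 ≤ x := h x (by simp)
    have ih' := ih (fun y hy => h y (by simp [hy]))
    have hxP : 1 * 1 ≤ x * (contL l).1 :=
      mul_le_mul hx ih'.1 one_pos.le (by linarith [ih'.1])
    constructor
    · simp only [contL]; linarith [ih'.2]
    · simp only [contL]; linarith [ih'.1]

lemma cfVal_eq_contL : ∀ (l : List ℤ), (∀ y ∈ l, 1 ≤ y) → ∀ x : ℤ,
    cfVal x l = ((contL (x :: l)).1 : ℝ) / ((contL (x :: l)).2 : ℝ)
  | [], _, x => by simp [cfVal, contL]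
  | y :: l, h, x => by
    have hl : ∀ z ∈ l, 1 ≤ z := fun z hz => h z (by simp [hz])
    have ih := cfVal_eq_contL l hl y
    have h1 : 1 ≤ (contL (y :: l)).1 := (contL_pos (by simpa using h)).1
    have h2 : 1 ≤ (contL l).1 := (contL_pos hl).1
    have hden : (contL (y :: l)).2 = (contL l).1 := by simp [contL]
    have hN : (0:ℝ) < ((contL (y :: l)).1 : ℝ) := by exact_mod_cast h1
    have hkey : (contL (x :: y :: l)).1 = x * (contL (y :: l)).1 + (contL l).1 := by
      simp [contL]
    have hkey2 : (contL (x :: y :: l)).2 = (contL (y :: l)).1 := by simp [contL]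
    show (x : ℝ) + 1 / cfVal y l = _
    rw [ih, hden, hkey, hkey2, one_div, inv_div]
    push_cast
    field_simp

lemma contL_concat (l : List ℤ) (y z : ℤ) :
    contL (l ++ [y, z]) =
      (z * (contL (l ++ [y])).1 + (contL l).1, z * (contL (l ++ [y])).2 + (contL l).2) := by
  induction l with
  | nil =>
    simp only [List.nil_append, contL]
    rw [Prod.mk.injEq]
    constructor <;> ring
  | cons x l ih =>
    simp only [List.cons_append, contL, List.append_eq]
    rw [ih]
    rw [Prod.mk.injEq]
    constructor <;> ring

/-- `Mlist a k = [a 0, a 1, …, a (k-1)]`. -/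
def Mlist (a : ℕ → ℤ) : ℕ → List ℤ
  | 0 => []
  | k + 1 => a 0 :: List.map a (List.range' 1 k)

lemma Mlist_succ (a : ℕ → ℤ) (k : ℕ) : Mlist a (k + 1) = Mlist a k ++ [a k] := by
  cases k with
  | zero => simp [Mlist]
  | succ k =>
    show a 0 :: List.map a (List.range' 1 (k+1)) = (a 0 :: List.map a (List.range' 1 k)) ++ [a (k+1)]
    rw [List.range'_concat]
    simp [Nat.add_comm 1 k]

lemma contL_Mlist_append (a : ℕ → ℤ) (k : ℕ) (z : ℤ) :
    contL (Mlist a (k + 1) ++ [z]) =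
      (z * (contL (Mlist a (k + 1))).1 + (contL (Mlist a k)).1,
       z * (contL (Mlist a (k + 1))).2 + (contL (Mlist a k)).2) := by
  cases k with
  | zero =>
    simp only [Mlist, List.range'_zero, List.map_nil, List.nil_append, List.cons_append, contL]
    rw [Prod.mk.injEq]
    constructor <;> ring
  | succ k =>
    have h := Mlist_succ a (k + 1)
    have hc := contL_concat (Mlist a (k + 1)) (a (k + 1)) z
    rw [h, List.append_assoc]
    simpa using hc

lemma contL_Mlist_det (a : ℕ → ℤ) : ∀ k : ℕ,
    (contL (Mlist a (k + 1))).1 * (contL (Mlist a k)).2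
      - (contL (Mlist a k)).1 * (contL (Mlist a (k + 1))).2 = (-1) ^ (k + 1)
  | 0 => by simp [Mlist, contL]
  | k + 1 => by
    have ih := contL_Mlist_det a k
    have h := contL_Mlist_append a k (a (k + 1))
    rw [← Mlist_succ a (k + 1)] at h
    rw [h]
    linear_combination (-1 : ℤ) * ih

/-- Bridge between the continuants of `α`'s continued fraction and `contL`. -/
lemma bridge (α : ℝ) (n : ℕ) (a : ℕ → ℤ)
    (ha : ∀ k, k ≤ n → ∃ ip : IntFractPair ℝ, IntFractPair.stream α k = some ip ∧ ip.b = a k) :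
    ∀ k : ℕ, k ≤ n + 1 →
      ((GenContFract.of α).contsAux k).a = ((contL (Mlist a k)).1 : ℝ) ∧
      ((GenContFract.of α).contsAux k).b = ((contL (Mlist a k)).2 : ℝ)
  | 0, _ => by
    rw [zeroth_contAux_eq_one_zero]
    simp [Mlist, contL]
  | 1, _ => by
    obtain ⟨ip, hs, hab⟩ := ha 0 (Nat.zero_le n)
    have hip : IntFractPair.of α = ip := by
      have h0 := IntFractPair.stream_zero α
      rw [h0] at hs
      injection hs
    have ha0 : a 0 = ⌊α⌋ := by
      rw [← hab, ← hip]
      rfl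
    rw [first_contAux_eq_h_one]
    simp [Mlist, contL, of_h_eq_floor, ha0]
  | k + 2, hk => by
    have ih1 := bridge α n a ha k (by omega)
    have ih2 := bridge α n a ha (k + 1) (by omega)
    obtain ⟨ip, hs, hab⟩ := ha (k + 1) (by omega)
    have hsget : (GenContFract.of α).s.get? k = some ⟨1, (ip.b : ℝ)⟩ :=
      get?_of_eq_some_of_succ_get?_intFractPair_stream hs
    have hrec := contsAux_recurrence hsget rfl rfl
    have hM : contL (Mlist a (k + 2)) =
        (a (k+1) * (contL (Mlist a (k+1))).1 + (contL (Mlist a k)).1,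
         a (k+1) * (contL (Mlist a (k+1))).2 + (contL (Mlist a k)).2) := by
      rw [Mlist_succ a (k + 1)]
      exact contL_Mlist_append a k (a (k + 1))
    rw [hrec, hM, hab]
    constructor <;> simp [ih1.1, ih1.2, ih2.1, ih2.2] <;> push_cast <;> ring
lemma arith_int (c Qn q' Qs : ℤ) (hc : 1 ≤ c) (hQn : 1 ≤ Qn) (hq2 : 2 * Qn ≤ q')
    (hq'pos : 1 ≤ q') (hQs : Qs = q' + c * Qn) :
    2 * (Qs * q') ≤ c * (3 * q' ^ 2) := by
  nlinarith [mul_nonneg (by linarith : (0:ℤ) ≤ c - 1) (by nlinarith : (0:ℤ) ≤ q' * q'),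
    mul_nonneg (mul_nonneg (by linarith : (0:ℤ) ≤ c) (by linarith : (0:ℤ) ≤ q' - 2 * Qn))
      (by linarith : (0:ℤ) ≤ q')]

lemma arith_real (w c Qn Qs q' : ℝ) (hw : 1 < w) (hc : 1 ≤ c) (hQn : 1 ≤ Qn)
    (hq2 : 2 * Qn ≤ q') (hq'pos : 0 < q') (hQs : Qs = q' + c * Qn) :
    2 * ((w * Qs + Qn) * q') ≤ (w * c + 1) * (3 * q' ^ 2) := by
  subst hQs
  have h1 : 0 ≤ w * c * (q' - 2 * Qn) :=
    mul_nonneg (mul_nonneg (by linarith) (by linarith)) (by linarith)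
  have h2 : 0 ≤ w * (c - 1) * q' :=
    mul_nonneg (mul_nonneg (by linarith) (by linarith)) (by linarith)
  nlinarith [mul_pos hq'pos hq'pos, mul_le_mul_of_nonneg_right hq2 (le_of_lt hq'pos),
    mul_nonneg h1 (le_of_lt hq'pos), mul_nonneg h2 (le_of_lt hq'pos)]

/-- Case 2(b)iB in the proof of the refined Legendre theorem: if
`p/q = [a₀; …, a_{n-1}, b_n]` is irreducible, `n ≥ 1`, `b_n ≥ 2`, and `b_n < a_n`,
then `|α - p/q| ≥ 2/(3q²)`. -/
theorem case_2biB (α : ℝ) (n : ℕ) (hn : 1 ≤ n) (a : ℕ → ℤ)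
    (ha : ∀ k, k ≤ n → ∃ ip : IntFractPair ℝ, IntFractPair.stream α k = some ip ∧ ip.b = a k)
    (bn : ℤ) (hb : 2 ≤ bn) (hbn : bn < a n)
    (p q : ℤ) (hq : 1 ≤ q) (hcop : Int.gcd p q = 1)
    (hpq : (p : ℝ) / q = cfVal (a 0) (List.map a (List.range' 1 (n - 1)) ++ [bn])) :
    2 / (3 * (q : ℝ) ^ 2) ≤ |α - (p : ℝ) / q| := by
  have hn1 : n - 1 + 1 = n := Nat.succ_pred_eq_of_pos hn
  -- positivity of partial quotients
  have a_ge1 : ∀ i, 1 ≤ i → i ≤ n → 1 ≤ a i := by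
    intro i h1 h2
    obtain ⟨j, rfl⟩ : ∃ j, i = j + 1 := ⟨i - 1, by omega⟩
    obtain ⟨ip, hs, hab⟩ := ha (j + 1) h2
    rw [← hab]
    exact IntFractPair.one_le_succ_nth_stream_b hs
  set P : ℕ → ℤ := fun k => (contL (Mlist a k)).1 with hPdef
  set Q : ℕ → ℤ := fun k => (contL (Mlist a k)).2 with hQdef
  -- Q facts
  have hQfact : ∀ k, k ≤ n + 1 → 0 ≤ Q k ∧ (1 ≤ k → 1 ≤ Q k) := by
    intro k hk
    cases k with
    | zero => simp [hQdef, Mlist, contL]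
    | succ m =>
      have hQm : Q (m + 1) = (contL (List.map a (List.range' 1 m))).1 := by
        simp [hQdef, Mlist, contL]
      have h1 : 1 ≤ (contL (List.map a (List.range' 1 m))).1 := by
        refine (contL_pos ?_).1
        intro y hy
        obtain ⟨i, hi, rfl⟩ := List.mem_map.1 hy
        rw [List.mem_range'_1] at hi
        exact a_ge1 i hi.1 (by omega)
      refine ⟨by omega, fun _ => by omega⟩
  have hQn : 1 ≤ Q n := (hQfact n (by omega)).2 hn
  have hQn0 : 0 ≤ Q (n - 1) := (hQfact (n - 1) (by omega)).1
  have hQs : 1 ≤ Q (n + 1) := (hQfact (n + 1) le_rfl).2 (by omega)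
  -- determinant
  have hdet : P n * Q (n - 1) - P (n - 1) * Q n = (-1) ^ n := by
    have h := contL_Mlist_det a (n - 1)
    rw [hn1] at h
    exact h
  have hee : ((-1 : ℤ) ^ n) * ((-1 : ℤ) ^ n) = 1 := by
    rw [← pow_add, ← two_mul, pow_mul]
    norm_num
  -- recurrence at n+1
  have h := contL_Mlist_append a (n - 1) (a n)
  rw [hn1] at h
  rw [← Mlist_succ a n] at h
  have hrp : P (n + 1) = a n * P n + P (n - 1) := by
    show (contL (Mlist a (n + 1))).1 = a n * (contL (Mlist a n)).1 + (contL (Mlist a (n - 1))).1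
    rw [h]
  have hrq : Q (n + 1) = a n * Q n + Q (n - 1) := by
    show (contL (Mlist a (n + 1))).2 = a n * (contL (Mlist a n)).2 + (contL (Mlist a (n - 1))).2
    rw [h]
  clear h
  -- the value p'/q'
  set p' : ℤ := bn * P n + P (n - 1) with hp'def
  set q' : ℤ := bn * Q n + Q (n - 1) with hq'def
  have hq'2 : 2 ≤ q' := by nlinarith
  have hq'posR : (0 : ℝ) < (q' : ℝ) := by exact_mod_cast (by omega : (0:ℤ) < q')
  have hqposR : (0 : ℝ) < (q : ℝ) := by exact_mod_cast hq
  -- p/q = p'/q'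
  have hentry : ∀ y ∈ List.map a (List.range' 1 (n - 1)) ++ [bn], 1 ≤ y := by
    intro y hy
    rcases List.mem_append.1 hy with h | h
    · obtain ⟨i, hi, rfl⟩ := List.mem_map.1 h
      rw [List.mem_range'_1] at hi
      exact a_ge1 i hi.1 (by omega)
    · simp at h
      omega
  have hlist : (a 0) :: (List.map a (List.range' 1 (n - 1)) ++ [bn]) = Mlist a n ++ [bn] := by
    conv_rhs => rw [← hn1]
    simp [Mlist]
  have happ : contL (Mlist a n ++ [bn]) = (p', q') := by
    have h := contL_Mlist_append a (n - 1) bn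
    rw [hn1] at h
    exact h
  have hpq2 : (p : ℝ) / q = (p' : ℝ) / (q' : ℝ) := by
    rw [hpq, cfVal_eq_contL _ hentry (a 0), hlist, happ]
  -- identify p = p', q = q'
  have hcross : p * q' = p' * q := by
    have h := hpq2
    rw [div_eq_div_iff (by positivity) (by positivity)] at h
    exact_mod_cast h
  have hcop1 : IsCoprime p q := Int.isCoprime_iff_gcd_eq_one.mpr hcop
  have hkeycop : Q n * p' - P n * q' = -(-1) ^ n := by
    rw [hp'def, hq'def]
    linear_combination -hdet
  have hcop2 : IsCoprime p' q' := by
    refine ⟨-(-1) ^ n * Q n, (-1) ^ n * P n, ?_⟩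
    linear_combination (-(-1 : ℤ) ^ n) * hkeycop + hee
  have hqq' : q = q' := by
    have hd1 : q ∣ q' * p := ⟨p', by linarith [hcross]⟩
    have h1 : q ∣ q' := hcop1.symm.dvd_of_dvd_mul_right hd1
    have hd2 : q' ∣ q * p' := ⟨p, by linarith [hcross]⟩
    have h2 : q' ∣ q := hcop2.symm.dvd_of_dvd_mul_right hd2
    exact Int.dvd_antisymm (by omega) (by omega) h1 h2
  have hpp' : p = p' := by
    have hq0 : (q : ℤ) ≠ 0 := by omega
    have h3 : p * q = p' * q := by
      conv_lhs => rw [hqq']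
      exact hcross
    exact mul_right_cancel₀ hq0 h3
  subst hpp'
  rw [hqq'] at hq hcop hqposR ⊢
  clear hcross hpq2 hpq hcop1 hcop2 hkeycop hqq'
  -- bridge facts
  have hbrn := bridge α n a ha n (by omega)
  have hbrn1 := bridge α n a ha (n + 1) le_rfl
  obtain ⟨ipn, hsn, hbn'⟩ := ha n le_rfl
  have hα := compExactValue_correctness_of_stream_eq_some hsn
  -- abbreviations for continuants as reals
  have cna : ((GenContFract.of α).contsAux n).a = (P n : ℝ) := hbrn.1
  have cnb : ((GenContFract.of α).contsAux n).b = (Q n : ℝ) := hbrn.2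
  have cn1a : ((GenContFract.of α).contsAux (n + 1)).a = (P (n + 1) : ℝ) := hbrn1.1
  have cn1b : ((GenContFract.of α).contsAux (n + 1)).b = (Q (n + 1) : ℝ) := hbrn1.2
  have hc1 : 1 ≤ a n - bn := by omega
  have hQsR : (1 : ℝ) ≤ (Q (n + 1) : ℝ) := by exact_mod_cast hQs
  have hQnR : (1 : ℝ) ≤ (Q n : ℝ) := by exact_mod_cast hQn
  have hq2q : 2 * Q n ≤ q' := by nlinarith
  have hQspos : (0:ℤ) < Q (n + 1) := by linarith
  have hQsRpos : (0 : ℝ) < (Q (n + 1) : ℝ) := by exact_mod_cast hQspos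
  have hprod : (0 : ℝ) < ((Q (n + 1) * q' : ℤ) : ℝ) := by
    exact_mod_cast mul_pos hQspos (by linarith : (0:ℤ) < q')
  have h3q : (0 : ℝ) < 3 * (q' : ℝ) ^ 2 := by nlinarith [hq'posR]
  rcases eq_or_ne ipn.fr 0 with hfr | hfr
  · -- terminating case : α = P(n+1)/Q(n+1)
    have hα2 : α = (P (n + 1) : ℝ) / (Q (n + 1) : ℝ) := by
      rw [hα, GenContFract.compExactValue]
      simp [hfr, cn1a, cn1b]
    have hnum : P (n + 1) * q' - p' * Q (n + 1) = (-1) ^ n * (a n - bn) := by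
      rw [hrp, hq'def, hp'def, hrq]
      linear_combination (a n - bn) * hdet
    have hdiff : α - (p' : ℝ) / q' =
        (((-1 : ℤ) ^ n * (a n - bn) : ℤ) : ℝ) / ((Q (n + 1) * q' : ℤ) : ℝ) := by
      rw [hα2, div_sub_div _ _ (ne_of_gt hQsRpos) (ne_of_gt hq'posR), ← hnum]
      push_cast
      try ring_nf
    have habs : |α - (p' : ℝ) / q'| = ((a n - bn : ℤ) : ℝ) / ((Q (n + 1) * q' : ℤ) : ℝ) := by
      rw [hdiff, abs_div]
      congr 1
      · rw [← Int.cast_abs, abs_mul, abs_pow, abs_neg, abs_one, one_pow, one_mul,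
          abs_of_pos (by omega : (0:ℤ) < a n - bn)]
      · rw [← Int.cast_abs, abs_of_pos (by exact_mod_cast hprod : (0:ℤ) < Q (n+1) * q')]
    rw [habs]
    rw [div_le_div_iff₀ h3q hprod]
    have hQsrec : Q (n + 1) = q' + (a n - bn) * Q n := by rw [hrq, hq'def]; ring
    have hfin : 2 * (Q (n + 1) * q') ≤ (a n - bn) * (3 * q' ^ 2) :=
      arith_int (a n - bn) (Q n) q' (Q (n + 1)) hc1 hQn hq2q (by linarith) hQsrec
    exact_mod_cast hfin
  · -- non-terminating case
    have hfrpos : 0 < ipn.fr := lt_of_le_of_ne (IntFractPair.nth_stream_fr_nonneg hsn) (Ne.symm hfr)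
    have hfrlt : ipn.fr < 1 := IntFractPair.nth_stream_fr_lt_one hsn
    set w : ℝ := ipn.fr⁻¹ with hw
    have hw1 : 1 < w := (one_lt_inv₀ hfrpos).mpr hfrlt
    have hα2 : α = (w * (P (n + 1) : ℝ) + (P n : ℝ)) / (w * (Q (n + 1) : ℝ) + (Q n : ℝ)) := by
      rw [hα, GenContFract.compExactValue]
      simp only [hfr, if_false, nextConts, nextNum, nextDen, cn1a, cn1b, cna, cnb, ← hw]
      ring_nf
    have hDpos : (0 : ℝ) < w * (Q (n + 1) : ℝ) + (Q n : ℝ) := by nlinarith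
    set c : ℤ := a n - bn with hcdef
    have hcR : (1 : ℝ) ≤ (c : ℝ) := by exact_mod_cast hc1
    -- cast facts to ℝ
    have hdetR : (P n : ℝ) * (Q (n-1) : ℝ) - (P (n-1) : ℝ) * (Q n : ℝ) = (-1) ^ n := by
      exact_mod_cast hdet
    have hrpR : (P (n+1) : ℝ) = (a n : ℝ) * (P n : ℝ) + (P (n-1) : ℝ) := by exact_mod_cast hrp
    have hrqR : (Q (n+1) : ℝ) = (a n : ℝ) * (Q n : ℝ) + (Q (n-1) : ℝ) := by exact_mod_cast hrq
    have hp'R : (p' : ℝ) = (bn : ℝ) * (P n : ℝ) + (P (n-1) : ℝ) := by exact_mod_cast rfl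
    have hq'R : (q' : ℝ) = (bn : ℝ) * (Q n : ℝ) + (Q (n-1) : ℝ) := by exact_mod_cast rfl
    have hcRdef : (c : ℝ) = (a n : ℝ) - (bn : ℝ) := by exact_mod_cast rfl
    have hnum : (w * (P (n + 1) : ℝ) + (P n : ℝ)) * q' - (p' : ℝ) * (w * (Q (n + 1) : ℝ) + (Q n : ℝ))
        = (-1) ^ n * (w * (c : ℝ) + 1) := by
      rw [hrpR, hrqR, hp'R, hq'R, hcRdef]
      linear_combination (w * ((a n : ℝ) - (bn : ℝ)) + 1) * hdetR
    have hdiff : α - (p' : ℝ) / q' =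
        ((-1 : ℝ) ^ n * (w * (c : ℝ) + 1)) / ((w * (Q (n + 1) : ℝ) + (Q n : ℝ)) * (q' : ℝ)) := by
      rw [hα2, div_sub_div _ _ (ne_of_gt hDpos) (ne_of_gt hq'posR), ← hnum]
      try ring_nf
    have hNpos : (0 : ℝ) < w * (c : ℝ) + 1 := by
      have hh := mul_pos (lt_trans one_pos hw1) (lt_of_lt_of_le one_pos hcR)
      linarith
    have habs : |α - (p' : ℝ) / q'| =
        (w * (c : ℝ) + 1) / ((w * (Q (n + 1) : ℝ) + (Q n : ℝ)) * (q' : ℝ)) := by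
      rw [hdiff, abs_div, abs_mul, abs_pow, abs_neg, abs_one, one_pow, one_mul,
        abs_of_pos hNpos, abs_of_pos (mul_pos hDpos hq'posR)]
    rw [habs]
    rw [div_le_div_iff₀ h3q (mul_pos hDpos hq'posR)]
    -- 2 * ((w Q(n+1) + Qn) * q') ≤ (w c + 1) * (3 q'^2)
    have hq2qR : 2 * (Q n : ℝ) ≤ (q' : ℝ) := by exact_mod_cast hq2q
    have hQsRrec : (Q (n+1) : ℝ) = (q' : ℝ) + (c : ℝ) * (Q n : ℝ) := by
      rw [hrqR, hq'R, hcRdef]; ring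
    have hQn0R : (0 : ℝ) ≤ (Q (n-1) : ℝ) := by exact_mod_cast hQn0
    exact arith_real w (c : ℝ) (Q n : ℝ) (Q (n + 1) : ℝ) (q' : ℝ) hw1 hcR hQnR hq2qR hq'posR
      hQsRrec
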